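/- Bound on the reaction terms: Let κ_p, λ_p, λ_q, μ_pq > 0 with Υ := κ_p·μ_pq - λ_p·λ_q > 0, and set E_p := κ_p/λ_p, E_q := Υ/(λ_q·μ_pq). Define f_p(p,q) := -p(λ_p + μ_pq·q) + κ_p, f_q(p,q) := -q(λ_q - μ_pq·p), s_p'(p) := log(p/(E_p - p)), s_q'(q) := log(q/E_q), and s_q(q) := q(log(q/E_q) - 1) + E_q. Then for all p, q with 0 < p < E_p and q > 0, f_p(p,q)·s_p'(p) + f_q(p,q)·s_q'(q) ≤ C_f·(E_q + s_q(q)), where C_f := ((1 + log 2)/log 2)·E_p·(λ_p/E_q + 2·μ_pq). -/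

import Mathlib

/-- Bound on the reaction terms of the two-state conformational conversion system. -/
theorem reaction_term_bound
    (κp lp lq μpq : ℝ)
    (hκ : 0 < κp) (hlp : 0 < lp) (hlq : 0 < lq) (hμ : 0 < μpq)
    (hΥ : 0 < κp * μpq - lp * lq)
    (p q : ℝ) (hp0 : 0 < p) (hpE : p < κp / lp) (hq : 0 < q) :
    (-(p * (lp + μpq * q)) + κp) * Real.log (p / (κp / lp - p)) +
      (-(q * (lq - μpq * p))) * Real.log (q / ((κp * μpq - lp * lq) / (lq * μpq))) ≤
    ((1 + Real.log 2) / Real.log 2) * (κp / lp) *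
        (lp / ((κp * μpq - lp * lq) / (lq * μpq)) + 2 * μpq) *
      ((κp * μpq - lp * lq) / (lq * μpq) +
        (q * (Real.log (q / ((κp * μpq - lp * lq) / (lq * μpq))) - 1) +
          (κp * μpq - lp * lq) / (lq * μpq))) := by
  set Ep := κp / lp with hEpdef
  set Eq := (κp * μpq - lp * lq) / (lq * μpq) with hEqdef
  have hEp : 0 < Ep := div_pos hκ hlp
  have hEq : 0 < Eq := div_pos hΥ (mul_pos hlq hμ)
  have hκEp : κp = lp * Ep := by rw [hEpdef]; field_simp
  have hEqmul : lq * μpq * Eq = κp * μpq - lp * lq := by rw [hEqdef]; field_simp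
  have hEpp : 0 < Ep - p := by linarith
  set S := q * (Real.log (q / Eq) - 1) + Eq with hSdef
  have hlog2 : 0 < Real.log 2 := Real.log_pos (by norm_num)
  have hlog2le : Real.log 2 ≤ 1 := by
    have := Real.log_le_sub_one_of_pos (by norm_num : (0:ℝ) < 2); linarith
  -- basic log inequality : x * log (y/x) ≤ y - x
  have key : ∀ x y : ℝ, 0 < x → 0 < y → x * Real.log (y / x) ≤ y - x := by
    intro x y hx hy
    have h := Real.log_le_sub_one_of_pos (div_pos hy hx)
    have h2 : x * Real.log (y / x) ≤ x * (y / x - 1) :=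
      mul_le_mul_of_nonneg_left h hx.le
    have h3 : x * (y / x - 1) = y - x := by field_simp
    linarith
  -- rewrite logs
  have hLp : Real.log (p / (Ep - p)) = Real.log p - Real.log (Ep - p) :=
    Real.log_div hp0.ne' hEpp.ne'
  have hLq : Real.log (q / Eq) = Real.log q - Real.log Eq :=
    Real.log_div hq.ne' hEq.ne'
  -- A : (Ep - p) * log(p/(Ep-p)) ≤ Ep
  have A : (Ep - p) * (Real.log p - Real.log (Ep - p)) ≤ Ep := by
    have := key (Ep - p) p hEpp hp0
    rw [hLp] at this; linarith
  -- B : p * log((Ep-p)/p) ≤ Ep, i.e. -(p * (log p - log (Ep - p))) ≤ Ep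
  have B : -(p * (Real.log p - Real.log (Ep - p))) ≤ Ep := by
    have h1 : Real.log (Ep - p) ≤ Real.log Ep :=
      Real.log_le_log hEpp (by linarith)
    have h2 := key p Ep hp0 hEp
    rw [Real.log_div hEp.ne' hp0.ne'] at h2
    nlinarith [hp0]
  -- S ≥ 0
  have hS0 : 0 ≤ S := by
    have h := Real.log_le_sub_one_of_pos (div_pos hEq hq)
    rw [Real.log_div hEq.ne' hq.ne'] at h
    have h2 : q * (Real.log Eq - Real.log q) ≤ q * (Eq / q - 1) :=
      mul_le_mul_of_nonneg_left h hq.le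
    have h3 : q * (Eq / q - 1) = Eq - q := by field_simp
    rw [hSdef, hLq]; nlinarith
  -- F : q * log 2 ≤ Eq + S
  have hF : q * Real.log 2 ≤ Eq + S := by
    have h := Real.log_le_sub_one_of_pos (div_pos (by positivity : (0:ℝ) < 2 * Eq) hq)
    have heq : Real.log (2 * Eq / q) = Real.log 2 + Real.log Eq - Real.log q := by
      rw [Real.log_div (by positivity) hq.ne', Real.log_mul (by norm_num) hEq.ne']
    rw [heq] at h
    have h2 : q * (Real.log 2 + Real.log Eq - Real.log q) ≤ q * (2 * Eq / q - 1) :=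
      mul_le_mul_of_nonneg_left h hq.le
    have h3 : q * (2 * Eq / q - 1) = 2 * Eq - q := by field_simp
    rw [hSdef, hLq]; nlinarith
  -- D : lq * Eq ≤ lp * Ep
  have D : lq * Eq ≤ lp * Ep := by
    have h1 : lq * μpq * Eq ≤ κp * μpq := by rw [hEqmul]; linarith [mul_pos hlp hlq]
    have h2 : lq * Eq * μpq ≤ lp * Ep * μpq := by rw [hκEp] at h1; linarith [h1]
    exact le_of_mul_le_mul_right (by linarith) hμ
  -- bound the first reaction term
  have T1 : (-(p * (lp + μpq * q)) + κp) * Real.log (p / (Ep - p)) ≤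
      lp * Ep + μpq * Ep * q := by
    rw [hLp, hκEp]
    have e1 : (-(p * (lp + μpq * q)) + lp * Ep) * (Real.log p - Real.log (Ep - p)) =
        lp * ((Ep - p) * (Real.log p - Real.log (Ep - p))) +
          μpq * q * (-(p * (Real.log p - Real.log (Ep - p)))) := by ring
    rw [e1]
    have b1 : lp * ((Ep - p) * (Real.log p - Real.log (Ep - p))) ≤ lp * Ep :=
      mul_le_mul_of_nonneg_left A hlp.le
    have b2 : μpq * q * (-(p * (Real.log p - Real.log (Ep - p)))) ≤ μpq * q * Ep :=
      mul_le_mul_of_nonneg_left B (by positivity)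
    linarith [b1, b2, show μpq * q * Ep = μpq * Ep * q from by ring]
  -- bound the second reaction term
  have T2 : (-(q * (lq - μpq * p))) * Real.log (q / Eq) ≤
      μpq * Ep * S + μpq * Ep * q + lq * Eq := by
    have hqlog : q * Real.log (q / Eq) = S + q - Eq := by rw [hSdef]; ring
    have e1 : (-(q * (lq - μpq * p))) * Real.log (q / Eq) =
        (μpq * p - lq) * (q * Real.log (q / Eq)) := by ring
    rw [e1, hqlog]
    have hc1 : μpq * p - lq ≤ μpq * Ep := by
      have h := mul_le_mul_of_nonneg_left (le_of_lt hpE) hμ.le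
      linarith
    have b1 : (μpq * p - lq) * S ≤ μpq * Ep * S := mul_le_mul_of_nonneg_right hc1 hS0
    have b2 : (μpq * p - lq) * q ≤ μpq * Ep * q := mul_le_mul_of_nonneg_right hc1 hq.le
    have b3 : (μpq * p - lq) * (-Eq) ≤ lq * Eq := by
      have h2 : 0 ≤ μpq * p * Eq := by positivity
      linarith [show (μpq * p - lq) * (-Eq) = lq * Eq - μpq * p * Eq from by ring]
    linarith [b1, b2, b3]
  -- final arithmetic
  have hc : (2:ℝ) ≤ (1 + Real.log 2) / Real.log 2 := by
    rw [le_div_iff₀ hlog2]; linarith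
  have hclog : (1 + Real.log 2) / Real.log 2 * Real.log 2 = 1 + Real.log 2 :=
    div_mul_cancel₀ _ hlog2.ne'
  set c := (1 + Real.log 2) / Real.log 2 with hcdef
  have goalRHS : c * Ep * (lp / Eq + 2 * μpq) * (Eq + S) =
      c * Ep * (lp / Eq * (Eq + S)) + c * Ep * (2 * μpq) * (Eq + S) := by ring
  have hlpEq : lp / Eq * (Eq + S) = lp + lp * S / Eq := by field_simp
  have R1 : 2 * (lp * Ep) ≤ c * Ep * (lp / Eq * (Eq + S)) := by
    rw [hlpEq]
    have h1 : 0 ≤ lp * S / Eq := by positivity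
    have hx : 0 ≤ lp + lp * S / Eq := by linarith
    have h2 : Ep * lp ≤ Ep * (lp + lp * S / Eq) :=
      mul_le_mul_of_nonneg_left (by linarith) hEp.le
    have h3 : 2 * (Ep * (lp + lp * S / Eq)) ≤ c * (Ep * (lp + lp * S / Eq)) :=
      mul_le_mul_of_nonneg_right hc (mul_nonneg hEp.le hx)
    linarith [show c * Ep * (lp + lp * S / Eq) = c * (Ep * (lp + lp * S / Eq)) from by ring]
  have R2 : 2 * (μpq * Ep * q) + μpq * Ep * S ≤ c * Ep * (2 * μpq) * (Eq + S) := by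
    have hpos : 0 < μpq * Ep := mul_pos hμ hEp
    have h1 : 2 * (μpq * Ep) * (q * Real.log 2) ≤ 2 * (μpq * Ep) * (Eq + S) :=
      mul_le_mul_of_nonneg_left hF (by positivity)
    -- multiply target by log 2 and use c * log 2 = 1 + log 2
    rw [show c * Ep * (2 * μpq) * (Eq + S) = c * (2 * (μpq * Ep) * (Eq + S)) by ring]
    rw [← mul_le_mul_iff_of_pos_right hlog2]
    have hrw : c * (2 * (μpq * Ep) * (Eq + S)) * Real.log 2 =
        (1 + Real.log 2) * (2 * (μpq * Ep) * (Eq + S)) := by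
      rw [mul_comm, ← mul_assoc, mul_comm (Real.log 2) c, hclog]
    rw [hrw]
    linarith [h1, mul_nonneg (mul_nonneg hlog2.le hpos.le) hS0,
      mul_nonneg (mul_nonneg hlog2.le hpos.le) hEq.le]
  calc (-(p * (lp + μpq * q)) + κp) * Real.log (p / (Ep - p)) +
      (-(q * (lq - μpq * p))) * Real.log (q / Eq)
      ≤ (lp * Ep + μpq * Ep * q) + (μpq * Ep * S + μpq * Ep * q + lq * Eq) :=
        add_le_add T1 T2
    _ ≤ 2 * (lp * Ep) + (2 * (μpq * Ep * q) + μpq * Ep * S) := by linarith [D]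
    _ ≤ c * Ep * (lp / Eq * (Eq + S)) + c * Ep * (2 * μpq) * (Eq + S) := add_le_add R1 R2
    _ = c * Ep * (lp / Eq + 2 * μpq) * (Eq + S) := goalRHS.symm
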